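/- Let x ∈ Λ_I ⊂ Λ̄ and a = a_{ij} with both i, j ∈ I, and let b = b_{ij} be the corresponding root of Λ_I. Then for every s ∈ ℝ, the intersection of Λ_I with the closure in Λ̄ of { z ∈ Λ : a(z) ≥ s } equals { x ∈ Λ_I : b(x) ≥ s }; consequently f_x(a) = −b(x), and f_x(a) = −a(z) for any z ∈ Λ with r_I(z) = x. -/
import Mathlib


open Set Pointwise Topology Filter

namespace CompApp

variable {n : ℕ}

/-- The component `Λ_I`: the quotient of the functions `I → ℝ` by the line of
constants (so `Λ_I = Σ_{i∈I} ℝ η_i^I` with the relation `Σ_{i∈I} η_i^I = 0`). -/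
abbrev Comp (I : Finset (Fin n)) : Type :=
  (↥I → ℝ) ⧸ (Submodule.span ℝ {(1 : ↥I → ℝ)})

/-- quotient map onto a component -/
noncomputable def mkC (I : Finset (Fin n)) : (↥I → ℝ) →ₗ[ℝ] Comp I :=
  Submodule.mkQ _

/-- The apartment `Λ` itself, i.e. the component for `I = {1,…,n}`. -/
abbrev Apt (n : ℕ) : Type := Comp (Finset.univ : Finset (Fin n))

/-- restriction of functions from `{1,…,n}` to `J` -/
def resL (J : Finset (Fin n)) :
    ((↥(Finset.univ : Finset (Fin n)) → ℝ)) →ₗ[ℝ] (↥J → ℝ) :=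
  LinearMap.funLeft ℝ ℝ (fun j => ⟨j.1, Finset.mem_univ _⟩)

/-- The projection `r_J : Λ → Λ_J`, `Σ x_i η_i ↦ Σ_{i∈J} x_i η_i^J`. -/
noncomputable def resQ (J : Finset (Fin n)) : Apt n →ₗ[ℝ] Comp J :=
  Submodule.mapQ _ _ (resL J) (by
    rw [Submodule.span_le]
    intro x hx
    rw [Set.mem_singleton_iff] at hx
    subst hx
    exact Submodule.mem_comap.mpr (Submodule.subset_span rfl))

variable [NeZero n]

/-- The compactified apartment `Λ̄ = ⋃_{∅≠I⊆{1,…,n}} Λ_I` as a set. -/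
def CApt (n : ℕ) : Type := Σ I : {I : Finset (Fin n) // I.Nonempty}, Comp I.1

/-- The embedding `Λ ↪ Λ̄`. -/
def emb (z : Apt n) : CApt n := ⟨⟨Finset.univ, Finset.univ_nonempty⟩, z⟩

/-- The point of the boundary component `Λ_I` inside `Λ̄`. -/
def embC (I : Finset (Fin n)) (hI : I.Nonempty) (y : Comp I) : CApt n := ⟨⟨I, hI⟩, y⟩

/-- The cone `D_I = Σ_{i∉I} ℝ_{≥0}(−η_i) ⊆ Λ`. -/
noncomputable def cone (I : Finset (Fin n)) : Set (Apt n) :=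
  (mkC _) '' {x | (∀ l : ↥(Finset.univ : Finset (Fin n)), (l : Fin n) ∈ I → x l = 0) ∧
    ∀ l : ↥(Finset.univ : Finset (Fin n)), (l : Fin n) ∉ I → x l ≤ 0}

/-- The basic open set `C_U^I = ⋃_{I ⊆ J} r_J(U + D_I) ⊆ Λ̄`. -/
noncomputable def CUI (U : Set (Apt n)) (I : Finset (Fin n)) : Set (CApt n) :=
  {p | I ⊆ p.1.1 ∧ p.2 ∈ resQ p.1.1 '' (U + cone I)}

/-- Boundedness for subsets of the apartment `Λ`. -/
def BoundedA (U : Set (Apt n)) : Prop :=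
  ∃ t : Set (↥(Finset.univ : Finset (Fin n)) → ℝ),
    Bornology.IsBounded t ∧ U ⊆ (mkC _) '' t

/-- The topology of `Λ̄`: generated by the open subsets of `Λ` together with the
sets `C_U^I` for nonempty proper `I` and bounded open `U ⊆ Λ`. -/
noncomputable instance : TopologicalSpace (CApt n) :=
  TopologicalSpace.generateFrom
    ({s | ∃ U : Set (Apt n), IsOpen U ∧ s = emb '' U} ∪
     {s | ∃ (U : Set (Apt n)) (I : Finset (Fin n)), I.Nonempty ∧ I ≠ Finset.univ ∧
        IsOpen U ∧ BoundedA U ∧ s = CUI U I})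

/-- The root `a_{ij} = χ_i − χ_j` as a linear functional on `Λ`. -/
noncomputable def aFun (i j : Fin n) : Apt n →ₗ[ℝ] ℝ :=
  Submodule.liftQ _
    (LinearMap.proj (⟨i, Finset.mem_univ i⟩ : ↥(Finset.univ : Finset (Fin n))) -
      LinearMap.proj ⟨j, Finset.mem_univ j⟩) (by
    rw [Submodule.span_le]
    intro x hx
    rw [Set.mem_singleton_iff] at hx
    subst hx
    simp [LinearMap.mem_ker])

/-- The root `b_{ij}` of the component `Λ_I` (for `i, j ∈ I`). -/
noncomputable def bFun (I : Finset (Fin n)) (i j : ↥I) : Comp I →ₗ[ℝ] ℝ :=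
  Submodule.liftQ _
    (LinearMap.proj (R := ℝ) (φ := fun _ : ↥I => ℝ) i -
      LinearMap.proj (R := ℝ) (φ := fun _ : ↥I => ℝ) j) (by
    rw [Submodule.span_le]
    intro x hx
    rw [Set.mem_singleton_iff] at hx
    subst hx
    simp [LinearMap.mem_ker])

/-- The closure in `Λ̄` of the half-space `{ z ∈ Λ : a_{ij}(z) ≥ s }`. -/
noncomputable def halfCl (i j : Fin n) (s : ℝ) : Set (CApt n) :=
  closure (emb '' {z : Apt n | s ≤ aFun i j z})

/-- `f_Ω(a) = inf{ t : Ω ⊆ closure{ z ∈ Λ : a(z) ≥ −t } } ∈ ℝ ∪ {±∞}`,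
for `a = a_{ij}` (with `inf ∅ = +∞`). -/
noncomputable def fO (Ω : Set (CApt n)) (i j : Fin n) : EReal :=
  sInf {t : EReal | ∃ s : ℝ, t = (s : EReal) ∧ Ω ⊆ halfCl i j (-s)}


section AuxLemmas

variable {n : ℕ}

lemma mkC_mk' (I : Finset (Fin n)) (g : ↥I → ℝ) : mkC I g = Submodule.Quotient.mk g := rfl

lemma resQ_mk' (J : Finset (Fin n)) (g : ↥(Finset.univ : Finset (Fin n)) → ℝ) :
    resQ J (mkC _ g) = mkC J (resL J g) := rfl

lemma aFun_mk' (i j : Fin n) (g : ↥(Finset.univ : Finset (Fin n)) → ℝ) :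
    aFun i j (mkC _ g) = g ⟨i, Finset.mem_univ i⟩ - g ⟨j, Finset.mem_univ j⟩ := rfl

lemma bFun_mk' (I : Finset (Fin n)) (i j : ↥I) (g : ↥I → ℝ) :
    bFun I i j (mkC I g) = g i - g j := rfl

lemma resQ_univ' (z : Apt n) : resQ (Finset.univ : Finset (Fin n)) z = z := by
  obtain ⟨g, rfl⟩ := Submodule.Quotient.mk_surjective _ z
  rfl

lemma aFun_eq_bFun_resQ' (I : Finset (Fin n)) (i j : Fin n) (hiI : i ∈ I) (hjI : j ∈ I)
    (z : Apt n) : aFun i j z = bFun I ⟨i, hiI⟩ ⟨j, hjI⟩ (resQ I z) := by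
  obtain ⟨g, rfl⟩ := Submodule.Quotient.mk_surjective _ z
  rfl

variable [NeZero n]

lemma emb_inj' : Function.Injective (emb (n := n)) := fun a b h =>
  eq_of_heq (Sigma.mk.inj_iff.mp h).2

lemma embC_inj' (I : Finset (Fin n)) (hI : I.Nonempty) :
    Function.Injective (embC I hI) := fun a b h =>
  eq_of_heq (Sigma.mk.inj_iff.mp h).2

/-- The generating set of the topology on `CApt n`. -/
def GenSet (n : ℕ) [NeZero n] : Set (Set (CApt n)) :=
  ({s | ∃ U : Set (Apt n), IsOpen U ∧ s = emb '' U} ∪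
   {s | ∃ (U : Set (Apt n)) (I : Finset (Fin n)), I.Nonempty ∧ I ≠ Finset.univ ∧
      IsOpen U ∧ BoundedA U ∧ s = CUI U I})

lemma isOpen_iff_generateOpen' {O : Set (CApt n)} :
    IsOpen O ↔ TopologicalSpace.GenerateOpen (GenSet n) O := Iff.rfl

/-- Backward direction: `b(y) ≥ s` implies the boundary point lies in the closure. -/
lemma mem_halfCl_of_le' (I : Finset (Fin n)) (hI : I.Nonempty) (i j : Fin n)
    (hiI : i ∈ I) (hjI : j ∈ I) (y : Comp I) (s : ℝ)
    (hs : s ≤ bFun I ⟨i, hiI⟩ ⟨j, hjI⟩ y) : embC I hI y ∈ halfCl i j s := by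
  obtain ⟨h, rfl⟩ := Submodule.Quotient.mk_surjective _ y
  -- the approximating family
  set zf : ℝ → (↥(Finset.univ : Finset (Fin n)) → ℝ) :=
    fun t l => if hl : (l : Fin n) ∈ I then h ⟨(l : Fin n), hl⟩ else -t with hzf
  have hreszf : ∀ t : ℝ, resL I (zf t) = h := by
    intro t
    funext l
    show zf t ⟨(l : Fin n), Finset.mem_univ _⟩ = h l
    simp only [hzf]
    rw [dif_pos l.2]
  have hres : ∀ t : ℝ, resQ I (mkC _ (zf t)) = Submodule.Quotient.mk h := by
    intro t
    rw [resQ_mk', hreszf]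
    rfl
  have haz : ∀ t : ℝ, aFun i j (mkC _ (zf t)) =
      bFun I ⟨i, hiI⟩ ⟨j, hjI⟩ (Submodule.Quotient.mk h) := by
    intro t
    rw [aFun_mk']
    show (if hl : i ∈ I then h ⟨i, hl⟩ else -t) - (if hl : j ∈ I then h ⟨j, hl⟩ else -t) = _
    rw [dif_pos hiI, dif_pos hjI]
    rfl
  rw [halfCl, mem_closure_iff]
  intro O hO hp
  have key : ∀ O' : Set (CApt n), TopologicalSpace.GenerateOpen (GenSet n) O' →
      embC I hI (Submodule.Quotient.mk h) ∈ O' →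
      ∃ T : ℝ, ∀ t ≥ T, emb (mkC _ (zf t)) ∈ O' := by
    intro O' hgen
    induction hgen with
    | basic G hG =>
      intro hp
      rcases hG with ⟨U, hUopen, rfl⟩ | ⟨U, I', hI'ne, hI'univ, hUopen, hUbdd, rfl⟩
      · -- G = emb '' U : forces I = univ
        obtain ⟨u, hu, hemb⟩ := hp
        have hIu : (Finset.univ : Finset (Fin n)) = I := congrArg (fun p => p.1.1) hemb
        subst hIu
        have huy : u = Submodule.Quotient.mk h := eq_of_heq (Sigma.mk.inj_iff.mp hemb).2
        refine ⟨0, fun t _ => ⟨mkC _ (zf t), ?_, rfl⟩⟩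
        have : mkC _ (zf t) = Submodule.Quotient.mk h := (resQ_univ' _).symm.trans (hres t)
        rw [this, ← huy]
        exact hu
      · -- G = CUI U I'
        obtain ⟨hsub, hmem⟩ := hp
        replace hsub : I' ⊆ I := hsub
        obtain ⟨w, hw, hwy⟩ := hmem
        rw [Set.mem_add] at hw
        obtain ⟨u, hu, d, hd, rfl⟩ := hw
        obtain ⟨e, ⟨he0, hele⟩, rfl⟩ := hd
        obtain ⟨u₀, rfl⟩ := Submodule.Quotient.mk_surjective _ u
        -- from hwy, find the constant discrepancy
        have hq : mkC I (resL I (u₀ + e)) = mkC I h := by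
          have : (Submodule.Quotient.mk u₀ : Apt n) + mkC _ e = mkC _ (u₀ + e) :=
            (map_add (mkC _) u₀ e).symm
          rw [this] at hwy
          exact hwy
        have hq2 : resL I (u₀ + e) - h ∈ Submodule.span ℝ {(1 : ↥I → ℝ)} :=
          (Submodule.Quotient.eq _).mp hq
        obtain ⟨c, hc⟩ := Submodule.mem_span_singleton.mp hq2
        set u₁ : ↥(Finset.univ : Finset (Fin n)) → ℝ := u₀ - c • 1 with hu₁def
        have hu₁ : (Submodule.Quotient.mk u₁ : Apt n) = Submodule.Quotient.mk u₀ := by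
          rw [Submodule.Quotient.eq]
          have h1 : u₁ - u₀ = (-c) • (1 : ↥(Finset.univ : Finset (Fin n)) → ℝ) := by
            funext l
            simp [hu₁def]
          rw [h1]
          exact Submodule.smul_mem _ _ (Submodule.subset_span rfl)
        have hkey : ∀ (l : ↥(Finset.univ : Finset (Fin n))) (hl : (l : Fin n) ∈ I),
            u₁ l + e l = h ⟨(l : Fin n), hl⟩ := by
          intro l hl
          have := congrFun hc ⟨(l : Fin n), hl⟩
          have hrl : resL I (u₀ + e) ⟨(l : Fin n), hl⟩ = u₀ l + e l := rfl
          simp only [Pi.sub_apply, Pi.smul_apply, Pi.one_apply, smul_eq_mul, mul_one] at this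
          rw [hrl] at this
          simp only [hu₁def, Pi.sub_apply, Pi.smul_apply, Pi.one_apply, smul_eq_mul, mul_one]
          linarith
        refine ⟨‖u₁‖, fun t ht => ?_⟩
        set et : ↥(Finset.univ : Finset (Fin n)) → ℝ := fun l => zf t l - u₁ l with hetdef
        have hmkzf : mkC _ (zf t) = (Submodule.Quotient.mk u₁ : Apt n) + mkC _ et := by
          have hfun : zf t = u₁ + et := by
            funext l
            simp [hetdef]
          rw [hfun, map_add]
          rfl
        have het0 : ∀ l : ↥(Finset.univ : Finset (Fin n)), (l : Fin n) ∈ I' → et l = 0 := by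
          intro l hl
          have hlI : (l : Fin n) ∈ I := hsub hl
          have : zf t l = h ⟨(l : Fin n), hlI⟩ := dif_pos hlI
          simp only [hetdef, this]
          have := hkey l hlI
          have he := he0 l hl
          linarith
        have hetle : ∀ l : ↥(Finset.univ : Finset (Fin n)), (l : Fin n) ∉ I' → et l ≤ 0 := by
          intro l hl
          by_cases hlI : (l : Fin n) ∈ I
          · have : zf t l = h ⟨(l : Fin n), hlI⟩ := dif_pos hlI
            simp only [hetdef, this]
            have := hkey l hlI
            have he := hele l hl
            linarith
          · have : zf t l = -t := dif_neg hlI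
            simp only [hetdef, this]
            have hb : |u₁ l| ≤ ‖u₁‖ := by
              simpa using norm_le_pi_norm u₁ l
            have := abs_le.mp hb
            linarith
        refine ⟨Finset.subset_univ I', ⟨mkC _ (zf t), ?_, resQ_univ' _⟩⟩
        rw [Set.mem_add]
        refine ⟨Submodule.Quotient.mk u₁, by rw [hu₁]; exact hu, mkC _ et,
          ⟨et, ⟨het0, hetle⟩, rfl⟩, hmkzf.symm⟩
    | univ => exact fun _ => ⟨0, fun _ _ => trivial⟩
    | inter O₁ O₂ h₁ h₂ ih₁ ih₂ =>
      intro hp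
      obtain ⟨T₁, hT₁⟩ := ih₁ hp.1
      obtain ⟨T₂, hT₂⟩ := ih₂ hp.2
      exact ⟨max T₁ T₂, fun t ht =>
        ⟨hT₁ t (le_trans (le_max_left _ _) ht), hT₂ t (le_trans (le_max_right _ _) ht)⟩⟩
    | sUnion S hS ih =>
      intro hp
      obtain ⟨O₁, hO₁, hpO₁⟩ := hp
      obtain ⟨T, hT⟩ := ih O₁ hO₁ hpO₁
      exact ⟨T, fun t ht => ⟨O₁, hO₁, hT t ht⟩⟩
  obtain ⟨T, hT⟩ := key O hO hp
  refine ⟨emb (mkC _ (zf T)), hT T le_rfl, mkC _ (zf T), ?_, rfl⟩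
  show s ≤ aFun i j (mkC _ (zf T))
  rw [haz T]
  exact hs

/-- Forward direction: membership in the closure forces `s ≤ b(y)`. -/
lemma le_of_mem_halfCl' (I : Finset (Fin n)) (hI : I.Nonempty) (i j : Fin n)
    (hiI : i ∈ I) (hjI : j ∈ I) (y : Comp I) (s : ℝ)
    (hcl : embC I hI y ∈ halfCl i j s) : s ≤ bFun I ⟨i, hiI⟩ ⟨j, hjI⟩ y := by
  by_contra hlt
  push_neg at hlt
  obtain ⟨h, rfl⟩ := Submodule.Quotient.mk_surjective _ y
  set b₀ : ℝ := h ⟨i, hiI⟩ - h ⟨j, hjI⟩ with hb₀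
  have hby : bFun I ⟨i, hiI⟩ ⟨j, hjI⟩ (Submodule.Quotient.mk h) = b₀ := rfl
  rw [hby] at hlt
  set ε : ℝ := (s - b₀) / 2 with hε
  have hεpos : 0 < ε := by rw [hε]; linarith
  set f₀ : ↥(Finset.univ : Finset (Fin n)) → ℝ :=
    fun l => if hl : (l : Fin n) ∈ I then h ⟨(l : Fin n), hl⟩ else 0 with hf₀
  set U : Set (Apt n) := mkC _ '' Metric.ball f₀ ε with hU
  have hUopen : IsOpen U := Submodule.isOpenMap_mkQ _ _ Metric.isOpen_ball
  have hUbdd : BoundedA U := ⟨Metric.ball f₀ ε, Metric.isBounded_ball, le_refl _⟩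
  have hUa : ∀ u ∈ U, aFun i j u < s := by
    rintro u ⟨g, hg, rfl⟩
    rw [aFun_mk']
    have hgb := Metric.mem_ball.mp hg
    have hdi : |g ⟨i, Finset.mem_univ i⟩ - f₀ ⟨i, Finset.mem_univ i⟩| < ε := by
      have := lt_of_le_of_lt (dist_le_pi_dist g f₀ ⟨i, Finset.mem_univ i⟩) hgb
      rwa [Real.dist_eq] at this
    have hdj : |g ⟨j, Finset.mem_univ j⟩ - f₀ ⟨j, Finset.mem_univ j⟩| < ε := by
      have := lt_of_le_of_lt (dist_le_pi_dist g f₀ ⟨j, Finset.mem_univ j⟩) hgb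
      rwa [Real.dist_eq] at this
    have hfi : f₀ ⟨i, Finset.mem_univ i⟩ = h ⟨i, hiI⟩ := dif_pos hiI
    have hfj : f₀ ⟨j, Finset.mem_univ j⟩ = h ⟨j, hjI⟩ := dif_pos hjI
    rw [hfi] at hdi
    rw [hfj] at hdj
    have h1 := (abs_lt.mp hdi).2
    have h2 := (abs_lt.mp hdj).1
    rw [hε, hb₀] at h1 h2
    linarith
  have hCa : ∀ z ∈ U + cone I, aFun i j z < s := by
    intro z hz
    rw [Set.mem_add] at hz
    obtain ⟨u, hu, d, hd, rfl⟩ := hz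
    obtain ⟨e, ⟨he0, _⟩, rfl⟩ := hd
    rw [map_add]
    have h0 : aFun i j (mkC _ e) = 0 := by
      rw [aFun_mk', he0 _ hiI, he0 _ hjI]
      ring
    rw [h0, add_zero]
    exact hUa u hu
  have hresf₀ : resQ I (mkC _ f₀) = Submodule.Quotient.mk h := by
    have : resL I f₀ = h := by
      funext l
      show f₀ ⟨(l : Fin n), Finset.mem_univ _⟩ = h l
      simp only [hf₀]
      rw [dif_pos l.2]
    rw [resQ_mk', this]
    rfl
  have hpU : mkC _ f₀ ∈ U := ⟨f₀, Metric.mem_ball_self hεpos, rfl⟩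
  have hf₀UC : mkC _ f₀ ∈ U + cone I := by
    rw [Set.mem_add]
    refine ⟨mkC _ f₀, hpU, mkC _ 0, ⟨0, ⟨fun l _ => rfl, fun l _ => le_refl 0⟩, rfl⟩, ?_⟩
    rw [map_zero, add_zero]
  by_cases hIu : I = Finset.univ
  · subst hIu
    set O : Set (CApt n) := emb '' U with hO
    have hOopen : IsOpen O :=
      isOpen_iff_generateOpen'.mpr (.basic _ (Or.inl ⟨U, hUopen, rfl⟩))
    have hmkf : mkC _ f₀ = (Submodule.Quotient.mk h : Apt n) :=
      (resQ_univ' _).symm.trans hresf₀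
    have hpO : embC Finset.univ hI (Submodule.Quotient.mk h) ∈ O := by
      have : embC Finset.univ hI (Submodule.Quotient.mk h) = emb (mkC _ f₀) := by
        rw [hmkf]
        rfl
      rw [this]
      exact ⟨mkC _ f₀, hpU, rfl⟩
    obtain ⟨q, hqO, hqS⟩ := (mem_closure_iff.mp hcl) O hOopen hpO
    obtain ⟨z, hz, rfl⟩ := hqS
    obtain ⟨u, hu, hequ⟩ := hqO
    have : u = z := emb_inj' hequ
    subst this
    exact absurd hz (not_le.mpr (hUa u hu))
  · set O : Set (CApt n) := CUI U I with hO
    have hOopen : IsOpen O :=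
      isOpen_iff_generateOpen'.mpr (.basic _ (Or.inr ⟨U, I, hI, hIu, hUopen, hUbdd, rfl⟩))
    have hpO : embC I hI (Submodule.Quotient.mk h) ∈ O :=
      ⟨subset_refl I, ⟨mkC _ f₀, hf₀UC, hresf₀⟩⟩
    obtain ⟨q, hqO, hqS⟩ := (mem_closure_iff.mp hcl) O hOopen hpO
    obtain ⟨z, hz, rfl⟩ := hqS
    obtain ⟨_, w, hw, hwz⟩ := hqO
    have hwz' : w = z := (resQ_univ' w).symm.trans hwz
    subst hwz'
    exact absurd hz (not_le.mpr (hCa w hw))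

/-- Combined characterization. -/
lemma mem_halfCl_iff' (I : Finset (Fin n)) (hI : I.Nonempty) (i j : Fin n)
    (hiI : i ∈ I) (hjI : j ∈ I) (y : Comp I) (s : ℝ) :
    embC I hI y ∈ halfCl i j s ↔ s ≤ bFun I ⟨i, hiI⟩ ⟨j, hjI⟩ y :=
  ⟨le_of_mem_halfCl' I hI i j hiI hjI y s, mem_halfCl_of_le' I hI i j hiI hjI y s⟩

end AuxLemmas

/-- Let `x ∈ Λ_I ⊂ Λ̄` and `a = a_{ij}` with both `i, j ∈ I`, and let
`b = b_{ij}` be the corresponding root of `Λ_I`.  Then for every `s ∈ ℝ` the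
intersection of `Λ_I` with the closure in `Λ̄` of `{ z ∈ Λ : a(z) ≥ s }` equals
`{ x ∈ Λ_I : b(x) ≥ s }`; consequently `f_x(a) = −b(x)`, and `f_x(a) = −a(z)`
for any `z ∈ Λ` with `r_I(z) = x`. -/
theorem halfCl_inter_component {n : ℕ} [NeZero n]
    (I : Finset (Fin n)) (hI : I.Nonempty)
    (i j : Fin n) (hij : i ≠ j) (hiI : i ∈ I) (hjI : j ∈ I) :
    (∀ s : ℝ, halfCl i j s ∩ Set.range (embC I hI) =
        embC I hI '' {y : Comp I | s ≤ bFun I ⟨i, hiI⟩ ⟨j, hjI⟩ y}) ∧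
    (∀ y : Comp I,
        fO {embC I hI y} i j = ((-(bFun I ⟨i, hiI⟩ ⟨j, hjI⟩ y) : ℝ) : EReal)) ∧
    (∀ (y : Comp I) (z : Apt n), resQ I z = y →
        fO {embC I hI y} i j = ((-(aFun i j z) : ℝ) : EReal)) := by
  have hpart2 : ∀ y : Comp I,
      fO {embC I hI y} i j = ((-(bFun I ⟨i, hiI⟩ ⟨j, hjI⟩ y) : ℝ) : EReal) := by
    intro y
    set b₀ : ℝ := bFun I ⟨i, hiI⟩ ⟨j, hjI⟩ y with hb₀
    have hmem : ∀ s : ℝ, {embC I hI y} ⊆ halfCl i j (-s) ↔ -s ≤ b₀ := by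
      intro s
      rw [Set.singleton_subset_iff]
      exact mem_halfCl_iff' I hI i j hiI hjI y (-s)
    rw [fO]
    apply le_antisymm
    · apply sInf_le
      exact ⟨-b₀, rfl, (hmem (-b₀)).mpr (by rw [neg_neg])⟩
    · apply le_sInf
      rintro t ⟨s, rfl, hsub⟩
      have : -b₀ ≤ s := by
        have := (hmem s).mp hsub
        linarith
      exact_mod_cast this
  refine ⟨?_, hpart2, ?_⟩
  · intro s
    ext p
    constructor
    · rintro ⟨hcl, y, rfl⟩
      exact ⟨y, le_of_mem_halfCl' I hI i j hiI hjI y s hcl, rfl⟩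
    · rintro ⟨y, hy, rfl⟩
      exact ⟨mem_halfCl_of_le' I hI i j hiI hjI y s hy, y, rfl⟩
  · intro y z hz
    rw [hpart2 y, aFun_eq_bFun_resQ' I i j hiI hjI z, hz]

end CompApp
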